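/- Let f : V → V' be a k-linear map between vector spaces with bases B = B₀ ∪ B₁ ∪ B₂ (disjoint) and B' = B'₀ ∪ B'₁ (disjoint) satisfying: (W1) f(b) = 0 for all b ∈ B₀; (W2) f(B₁) ⊆ B'₁ and f restricted to B₁ is injective; (W3) for each b ∈ B₂, f(b) = b₀ + Σ_{c ∈ B₁(b)} f(c) for some b₀ ∈ B'₀ and some finite subset B₁(b) ⊆ B₁, and the assignment b ↦ b₀ is injective on B₂. Then B₀ is a k-basis of Ker f and f(B₁) ∪ {b₀ | b ∈ B₂} is a k-basis of Im f. -/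

import Mathlib

/-- **Condition (W) determines the kernel and the image.**
Let `f : V → V'` be a `k`-linear map between vector spaces with bases `B` indexed by
`ι₀ ⊕ ι₁ ⊕ ι₂` and `B'` indexed by `ι'₀ ⊕ ι'₁`, satisfying:
(W1) `f` kills the `ι₀`-part of `B`;
(W2) `f` maps the `ι₁`-part of `B` injectively to basis vectors in the `ι'₁`-part of `B'`;
(W3) for each `b ∈ ι₂`, `f(B b) = B'(b₀ b) + ∑_{c ∈ S b} f (B c)` with `b₀ b` in the
`ι'₀`-part, `S b ⊆ ι₁` finite, and `b ↦ b₀ b` injective.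
Then the `ι₀`-part of `B` is a basis of `Ker f`, and the family consisting of the images
of the `ι₁`-part of `B` together with the vectors `B'(b₀ b)` is a basis of `Im f`. -/
theorem projective_leavitt_condition_W_ker_im_basis
    {k V V' : Type*} [Field k] [AddCommGroup V] [Module k V]
    [AddCommGroup V'] [Module k V'] {ι₀ ι₁ ι₂ ι'₀ ι'₁ : Type*}
    (B : Module.Basis (ι₀ ⊕ ι₁ ⊕ ι₂) k V) (B' : Module.Basis (ι'₀ ⊕ ι'₁) k V')
    (f : V →ₗ[k] V')
    (g : ι₁ → ι'₁) (hg : Function.Injective g)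
    (b₀ : ι₂ → ι'₀) (hb₀ : Function.Injective b₀)
    (S : ι₂ → Finset ι₁)
    (hW1 : ∀ i : ι₀, f (B (Sum.inl i)) = 0)
    (hW2 : ∀ i : ι₁, f (B (Sum.inr (Sum.inl i))) = B' (Sum.inr (g i)))
    (hW3 : ∀ b : ι₂, f (B (Sum.inr (Sum.inr b))) =
      B' (Sum.inl (b₀ b)) + ∑ c ∈ S b, f (B (Sum.inr (Sum.inl c)))) :
    (LinearIndependent k fun i : ι₀ => B (Sum.inl i)) ∧
    Submodule.span k (Set.range fun i : ι₀ => B (Sum.inl i)) = LinearMap.ker f ∧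
    (LinearIndependent k
      (Sum.elim (fun i : ι₁ => f (B (Sum.inr (Sum.inl i))))
        (fun b : ι₂ => B' (Sum.inl (b₀ b))))) ∧
    Submodule.span k (Set.range
      (Sum.elim (fun i : ι₁ => f (B (Sum.inr (Sum.inl i))))
        (fun b : ι₂ => B' (Sum.inl (b₀ b))))) = LinearMap.range f := by
  classical
  -- the coordinate functions of the images of basis vectors
  set F : (ι₀ ⊕ ι₁ ⊕ ι₂) → ((ι'₀ ⊕ ι'₁) →₀ k) := fun j => B'.repr (f (B j)) with hF
  have F0 : ∀ i : ι₀, F (Sum.inl i) = 0 := by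
    intro i; simp [hF, hW1]
  have F1 : ∀ i : ι₁, F (Sum.inr (Sum.inl i)) = Finsupp.single (Sum.inr (g i)) 1 := by
    intro i; simp [hF, hW2]
  have F2 : ∀ b : ι₂, F (Sum.inr (Sum.inr b)) =
      Finsupp.single (Sum.inl (b₀ b)) 1 + ∑ x ∈ S b, Finsupp.single (Sum.inr (g x)) 1 := by
    intro b; simp [hF, hW3, hW2]
  refine ⟨B.linearIndependent.comp _ Sum.inl_injective, ?_, ?_, ?_⟩
  · -- kernel
    apply le_antisymm
    · rw [Submodule.span_le]
      rintro _ ⟨i, rfl⟩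
      simp [LinearMap.mem_ker, hW1]
    · intro v hv
      rw [LinearMap.mem_ker] at hv
      set c := B.repr v with hc
      have key : ∀ x : ι'₀ ⊕ ι'₁, (c.sum fun j a => a * F j x) = 0 := by
        intro x
        set φ : V →ₗ[k] ((ι'₀ ⊕ ι'₁) →₀ k) :=
          (B'.repr : V' ≃ₗ[k] ((ι'₀ ⊕ ι'₁) →₀ k)).toLinearMap ∘ₗ f with hφ
        have hFφ : F = ⇑φ ∘ ⇑B := by funext j; simp [hF, hφ]
        have h1 : Finsupp.linearCombination k F c = 0 := by
          rw [hFφ, ← Finsupp.apply_linearCombination, B.linearCombination_repr]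
          simp [hφ, hv]
        have := DFunLike.congr_fun h1 x
        rw [Finsupp.linearCombination_apply] at this
        simpa [Finsupp.sum_apply] using this
      have h2 : ∀ b : ι₂, c (Sum.inr (Sum.inr b)) = 0 := by
        intro b
        have hx := key (Sum.inl (b₀ b))
        have : (c.sum fun j a => a * F j (Sum.inl (b₀ b))) =
            c.sum fun j a => if j = Sum.inr (Sum.inr b) then a else 0 := by
          apply Finsupp.sum_congr
          intro j hj
          rcases j with i | i | b'
          · simp [F0]
          · simp [F1, Finsupp.single_apply]
          · simp only [F2, Finsupp.add_apply, Finsupp.single_apply,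
              Finsupp.coe_finset_sum, Finset.sum_apply, reduceCtorEq, if_false,
              Finset.sum_const_zero, add_zero, Sum.inl.injEq, Sum.inr.injEq]
            by_cases hbb : b' = b
            · subst hbb; simp
            · have hne : b₀ b' ≠ b₀ b := fun h => hbb (hb₀ h)
              simp [hne, hbb]
        rw [this] at hx
        rw [Finsupp.sum] at hx
        rw [Finset.sum_ite_eq' c.support _ (fun j => c j)] at hx
        by_cases hmem : Sum.inr (Sum.inr b) ∈ c.support
        · rwa [if_pos hmem] at hx
        · exact Finsupp.notMem_support_iff.1 hmem
      have h3 : ∀ i : ι₁, c (Sum.inr (Sum.inl i)) = 0 := by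
        intro i
        have hx := key (Sum.inr (g i))
        have : (c.sum fun j a => a * F j (Sum.inr (g i))) =
            c.sum fun j a => if j = Sum.inr (Sum.inl i) then a else 0 := by
          apply Finsupp.sum_congr
          intro j hj
          rcases j with i' | i' | b'
          · simp [F0]
          · simp only [F1, Finsupp.single_apply]
            by_cases hii : i' = i
            · subst hii; simp
            · have : g i' ≠ g i := fun h => hii (hg h)
              simp [this, hii]
          · exact absurd (h2 b') (Finsupp.mem_support_iff.1 hj)
        rw [this] at hx
        rw [Finsupp.sum] at hx
        rw [Finset.sum_ite_eq' c.support _ (fun j => c j)] at hx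
        by_cases hmem : Sum.inr (Sum.inl i) ∈ c.support
        · rwa [if_pos hmem] at hx
        · exact Finsupp.notMem_support_iff.1 hmem
      have hrep : v = c.sum fun j a => a • B j := by
        conv_lhs => rw [← B.linearCombination_repr v]
        rw [Finsupp.linearCombination_apply]
      rw [hrep]
      rw [Finsupp.sum]; apply Submodule.sum_mem
      intro j hj; replace hj := Finsupp.mem_support_iff.1 hj
      rcases j with i | i | b
      · exact Submodule.smul_mem _ _ (Submodule.subset_span ⟨i, rfl⟩)
      · exact absurd (h3 i) hj
      · exact absurd (h2 b) hj
  · -- linear independence of the image family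
    have hfun : (Sum.elim (fun i : ι₁ => f (B (Sum.inr (Sum.inl i))))
        (fun b : ι₂ => B' (Sum.inl (b₀ b)))) =
        fun j => B' (Sum.elim (fun i => Sum.inr (g i)) (fun b => Sum.inl (b₀ b)) j) := by
      funext j; rcases j with i | b <;> simp [hW2]
    rw [hfun]
    refine B'.linearIndependent.comp _ ?_
    rintro (x | x) (y | y) hxy <;> simp_all
    · exact hg hxy
    · exact hb₀ hxy
  · -- span of the image family
    apply le_antisymm
    · rw [Submodule.span_le]
      rintro _ ⟨j, rfl⟩
      rcases j with i | b
      · exact ⟨B (Sum.inr (Sum.inl i)), rfl⟩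
      · refine ⟨B (Sum.inr (Sum.inr b)) - ∑ c ∈ S b, B (Sum.inr (Sum.inl c)), ?_⟩
        rw [map_sub, map_sum, hW3]
        simp
    · rw [LinearMap.range_eq_map, ← B.span_eq, Submodule.map_span, Submodule.span_le]
      rintro _ ⟨_, ⟨j, rfl⟩, rfl⟩
      rcases j with i | i | b
      · rw [hW1]; exact Submodule.zero_mem _
      · exact Submodule.subset_span ⟨Sum.inl i, rfl⟩
      · rw [hW3]
        refine Submodule.add_mem _ (Submodule.subset_span ⟨Sum.inr b, rfl⟩) ?_
        exact Submodule.sum_mem _ fun c _ => Submodule.subset_span ⟨Sum.inl c, rfl⟩
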